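/- Suppose binary images I₁ = α₁ χ_{S₁} and I₂ = α₂ χ_{S₂} (with α₁, α₂ > 0 normalization constants making ∫ f Iⱼ = 1) are both minimizers of the weighted TV problem inf { ∫_Ω g|∇I| : I ∈ BV(Ω), I ≥ 0, ∫_Ω f I = 1 }, and assume the minimizer set is closed under the level-set operation (Theorem 1 hypothesis) and under taking unions of minimizing sets. Then there exists a unique maximal minimizing set S_max, i.e., a minimizer χ_{S_max}/∫_{S_max} f such that the support of every minimizing set is contained in S_max. -/

import Mathlib

open MeasureTheory

noncomputable def divergence2 (φ : EuclideanSpace ℝ (Fin 2) → EuclideanSpace ℝ (Fin 2))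
    (x : EuclideanSpace ℝ (Fin 2)) : ℝ :=
  ∑ i, fderiv ℝ (fun y => φ y i) x (EuclideanSpace.single i 1)

/-- `g`-weighted total variation of `u` over `Ω`. -/
noncomputable def wTV (g : EuclideanSpace ℝ (Fin 2) → ℝ) (Ω : Set (EuclideanSpace ℝ (Fin 2)))
    (u : EuclideanSpace ℝ (Fin 2) → ℝ) : ENNReal :=
  ⨆ φ ∈ {φ : EuclideanSpace ℝ (Fin 2) → EuclideanSpace ℝ (Fin 2) |
      ContDiff ℝ 1 φ ∧ HasCompactSupport φ ∧ tsupport φ ⊆ Ω ∧ ∀ x, ‖φ x‖ ≤ g x},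
    ENNReal.ofReal (∫ x in Ω, u x * divergence2 φ x)

/-- Feasible set: nonnegative BV images with unit `f`-measurement. -/
def Feas (g f : EuclideanSpace ℝ (Fin 2) → ℝ) (Ω : Set (EuclideanSpace ℝ (Fin 2))) :
    Set (EuclideanSpace ℝ (Fin 2) → ℝ) :=
  {I | (∀ x, 0 ≤ I x) ∧ wTV g Ω I < ⊤ ∧ ∫ x in Ω, f x * I x = 1}

/-- `I` minimizes the weighted TV over the feasible set. -/
def IsMinimizer (g f : EuclideanSpace ℝ (Fin 2) → ℝ) (Ω : Set (EuclideanSpace ℝ (Fin 2)))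
    (I : EuclideanSpace ℝ (Fin 2) → ℝ) : Prop :=
  I ∈ Feas g f Ω ∧ ∀ J ∈ Feas g f Ω, wTV g Ω I ≤ wTV g Ω J

/-- `S` is a minimizing (generalized Cheeger) set: its normalized indicator minimizes. -/
def IsMinSet (g f : EuclideanSpace ℝ (Fin 2) → ℝ) (Ω S : Set (EuclideanSpace ℝ (Fin 2))) : Prop :=
  MeasurableSet S ∧ S ⊆ Ω ∧ 0 < ∫ x in S, f x ∧
    IsMinimizer g f Ω (fun x => (∫ y in S, f y)⁻¹ * S.indicator 1 x)

lemma div2_cont {φ : EuclideanSpace ℝ (Fin 2) → EuclideanSpace ℝ (Fin 2)}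
    (hφ : ContDiff ℝ 1 φ) : Continuous (divergence2 φ) := by
  unfold divergence2
  refine continuous_finset_sum _ fun i _ => ?_
  have h1 : ContDiff ℝ 1 (fun y => φ y i) :=
    (EuclideanSpace.proj (𝕜 := ℝ) i).contDiff.comp hφ
  exact (h1.continuous_fderiv one_ne_zero).clm_apply continuous_const

lemma div2_compact {φ : EuclideanSpace ℝ (Fin 2) → EuclideanSpace ℝ (Fin 2)}
    (hφc : HasCompactSupport φ) : HasCompactSupport (divergence2 φ) := by
  refine HasCompactSupport.intro hφc fun x hx => ?_
  have hopen : IsOpen (tsupport φ)ᶜ := (isClosed_tsupport φ).isOpen_compl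
  have hev : ∀ i : Fin 2, (fun y => φ y i) =ᶠ[nhds x] (fun _ => (0:ℝ)) := by
    intro i
    filter_upwards [hopen.mem_nhds hx] with y hy
    rw [image_eq_zero_of_notMem_tsupport hy]; rfl
  unfold divergence2
  refine Finset.sum_eq_zero fun i _ => ?_
  rw [(hev i).fderiv_eq, fderiv_fun_const]
  rfl

lemma le_wTV {g : EuclideanSpace ℝ (Fin 2) → ℝ} {Ω : Set (EuclideanSpace ℝ (Fin 2))}
    (u : EuclideanSpace ℝ (Fin 2) → ℝ) (φ : EuclideanSpace ℝ (Fin 2) → EuclideanSpace ℝ (Fin 2))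
    (h : ContDiff ℝ 1 φ ∧ HasCompactSupport φ ∧ tsupport φ ⊆ Ω ∧ (∀ x, ‖φ x‖ ≤ g x)) :
    ENNReal.ofReal (∫ x in Ω, u x * divergence2 φ x) ≤ wTV g Ω u :=
  le_iSup₂ (f := fun φ (_ : φ ∈ _) => ENNReal.ofReal (∫ x in Ω, u x * divergence2 φ x)) φ h

lemma indicator_integral_helper {U Ω : Set (EuclideanSpace ℝ (Fin 2))}
    (hU : MeasurableSet U) (hUΩ : U ⊆ Ω) (h : EuclideanSpace ℝ (Fin 2) → ℝ) (a : ℝ) :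
    ∫ x in Ω, (a * U.indicator 1 x) * h x = a * ∫ x in U, h x := by
  have heq : ∀ x, (a * U.indicator 1 x) * h x = a * U.indicator h x := by
    intro x; by_cases hx : x ∈ U <;> simp [hx]
  simp only [heq]
  rw [integral_const_mul, setIntegral_indicator hU, Set.inter_eq_self_of_subset_right hUΩ]

theorem stmt11 (Ω : Set (EuclideanSpace ℝ (Fin 2))) (hΩ : MeasurableSet Ω)
    (hΩbdd : Bornology.IsBounded Ω)
    (f g : EuclideanSpace ℝ (Fin 2) → ℝ) (hf0 : ∀ x, 0 ≤ f x) (hfint : IntegrableOn f Ω)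
    (c : ℝ) (hc : 0 < c) (hg : ∀ x, c ≤ g x)
    -- the two given binary minimizers
    (S₁ S₂ : Set (EuclideanSpace ℝ (Fin 2))) (h₁ : IsMinSet g f Ω S₁) (h₂ : IsMinSet g f Ω S₂)
    -- the minimizer set is closed under the level-set operation (Theorem 1 hypothesis)
    (hlevel : ∀ I, IsMinimizer g f Ω I → ∀ μ : ℝ, 0 < μ →
      0 < ∫ x in {x | μ ≤ I x} ∩ Ω, f x → IsMinSet g f Ω ({x | μ ≤ I x} ∩ Ω))
    -- the minimizing sets are closed under union
    (hunion : ∀ S S', IsMinSet g f Ω S → IsMinSet g f Ω S' → IsMinSet g f Ω (S ∪ S')) :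
    ∃ Smax : Set (EuclideanSpace ℝ (Fin 2)), IsMinSet g f Ω Smax ∧
      (∀ S, IsMinSet g f Ω S → volume (S \ Smax) = 0) ∧
      ∀ S', IsMinSet g f Ω S' → (∀ S, IsMinSet g f Ω S → volume (S \ S') = 0) →
        volume (symmDiff S' Smax) = 0 := by
  classical
  obtain ⟨hS₁meas, hS₁sub, hS₁pos, hS₁min⟩ := h₁
  have hu₁feas : (fun x => (∫ y in S₁, f y)⁻¹ * S₁.indicator 1 x) ∈ Feas g f Ω := hS₁min.1
  set m : ENNReal := wTV g Ω (fun x => (∫ y in S₁, f y)⁻¹ * S₁.indicator 1 x) with hm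
  have hmlt : m < ⊤ := hu₁feas.2.1
  have hΩfin : volume Ω < ⊤ := hΩbdd.measure_lt_top
  set M : ENNReal := ⨆ (S) (_ : IsMinSet g f Ω S), volume S with hM
  have hMle : M ≤ volume Ω := iSup₂_le fun S hS => measure_mono hS.2.1
  have hMne : M ≠ ⊤ := (lt_of_le_of_lt hMle hΩfin).ne
  have hle_M : ∀ S, IsMinSet g f Ω S → volume S ≤ M := fun S hS =>
    le_iSup₂ (f := fun S (_ : IsMinSet g f Ω S) => volume S) S hS
  -- choose an almost-maximizing sequence
  have hseq : ∀ n : ℕ, ∃ S, IsMinSet g f Ω S ∧ M - ((n : ENNReal))⁻¹ ≤ volume S := by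
    intro n
    rcases eq_or_ne M 0 with h0 | h0
    · exact ⟨S₁, ⟨hS₁meas, hS₁sub, hS₁pos, hS₁min⟩, by simp [h0]⟩
    · have hlt : M - ((n : ENNReal))⁻¹ < M :=
        ENNReal.sub_lt_self hMne h0 (by simp)
      rw [hM] at hlt
      simp only [lt_iSup_iff] at hlt
      obtain ⟨S, hS, hlt⟩ := hlt
      exact ⟨S, hS, hlt.le⟩
  choose Sq hSq hSqvol using hseq
  -- the increasing sequence of unions
  set T : ℕ → Set (EuclideanSpace ℝ (Fin 2)) :=
    fun n => Nat.rec (Sq 0) (fun k Tk => Tk ∪ Sq (k + 1)) n with hT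
  have hTsucc : ∀ n, T (n + 1) = T n ∪ Sq (n + 1) := fun n => rfl
  have hTmin : ∀ n, IsMinSet g f Ω (T n) := by
    intro n; induction n with
    | zero => exact hSq 0
    | succ k ih => exact hunion _ _ ih (hSq (k + 1))
  have hTmono : Monotone T :=
    monotone_nat_of_le_succ fun n => by rw [hTsucc]; exact Set.subset_union_left
  have hSqT : ∀ n, Sq n ⊆ T n := by
    intro n; cases n with
    | zero => exact subset_rfl
    | succ k => rw [hTsucc]; exact Set.subset_union_right
  set Tinf : Set (EuclideanSpace ℝ (Fin 2)) := ⋃ n, T n with hTinf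
  have hTinfMeas : MeasurableSet Tinf := MeasurableSet.iUnion fun n => (hTmin n).1
  have hTinfSub : Tinf ⊆ Ω := Set.iUnion_subset fun n => (hTmin n).2.1
  have hfTinf : IntegrableOn f Tinf := hfint.mono_set hTinfSub
  -- f-integrals converge
  have hc_tend : Filter.Tendsto (fun n => ∫ x in T n, f x) Filter.atTop
      (nhds (∫ x in Tinf, f x)) :=
    tendsto_setIntegral_of_monotone (fun n => (hTmin n).1) hTmono hfTinf
  have hcT_pos : 0 < ∫ x in Tinf, f x := by
    refine lt_of_lt_of_le (hTmin 0).2.2.1 ?_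
    refine setIntegral_mono_set hfTinf ?_ (Filter.Eventually.of_forall fun x hx => Set.mem_iUnion.2 ⟨0, hx⟩)
    exact Filter.Eventually.of_forall fun x => hf0 x
  have hcn_pos : ∀ n, 0 < ∫ x in T n, f x := fun n => (hTmin n).2.2.1
  -- key: wTV of the normalized indicator of Tinf is at most m
  have hwle : wTV g Ω (fun x => (∫ y in Tinf, f y)⁻¹ * Tinf.indicator 1 x) ≤ m := by
    refine iSup₂_le fun φ hφ => ?_
    obtain ⟨hφ1, hφ2, hφ3, hφ4⟩ := hφ
    have hdivInt : Integrable (divergence2 φ) :=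
      (div2_cont hφ1).integrable_of_hasCompactSupport (div2_compact hφ2)
    have hdiv_tend : Filter.Tendsto (fun n => ∫ x in T n, divergence2 φ x) Filter.atTop
        (nhds (∫ x in Tinf, divergence2 φ x)) :=
      tendsto_setIntegral_of_monotone (fun n => (hTmin n).1) hTmono hdivInt.integrableOn
    have htend : Filter.Tendsto
        (fun n => (∫ x in T n, f x)⁻¹ * ∫ x in T n, divergence2 φ x) Filter.atTop
        (nhds ((∫ x in Tinf, f x)⁻¹ * ∫ x in Tinf, divergence2 φ x)) :=
      ((hc_tend.inv₀ hcT_pos.ne').mul hdiv_tend)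
    have hb : ∀ n : ℕ,
        ENNReal.ofReal ((∫ x in T n, f x)⁻¹ * ∫ x in T n, divergence2 φ x) ≤ m := by
      intro n
      have h1 : ENNReal.ofReal (∫ x in Ω,
          (fun x => (∫ y in T n, f y)⁻¹ * (T n).indicator 1 x) x * divergence2 φ x) ≤
          wTV g Ω (fun x => (∫ y in T n, f y)⁻¹ * (T n).indicator 1 x) :=
        le_wTV _ φ ⟨hφ1, hφ2, hφ3, hφ4⟩
      rw [indicator_integral_helper (hTmin n).1 (hTmin n).2.1] at h1
      exact h1.trans ((hTmin n).2.2.2.2 _ hu₁feas)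
    have := le_of_tendsto' ((ENNReal.continuous_ofReal.tendsto _).comp htend) hb
    rwa [indicator_integral_helper hTinfMeas hTinfSub]
  -- Tinf is a minimizing set
  have hTinfMin : IsMinSet g f Ω Tinf := by
    refine ⟨hTinfMeas, hTinfSub, hcT_pos, ?_, ?_⟩
    · refine ⟨fun x => mul_nonneg (inv_nonneg.2 hcT_pos.le)
        (Set.indicator_nonneg (fun _ _ => zero_le_one) x), lt_of_le_of_lt hwle hmlt, ?_⟩
      have : ∀ x, f x * ((∫ y in Tinf, f y)⁻¹ * Tinf.indicator 1 x) =
          ((∫ y in Tinf, f y)⁻¹ * Tinf.indicator 1 x) * f x := fun x => mul_comm _ _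
      simp only [this]
      rw [indicator_integral_helper hTinfMeas hTinfSub f _]
      exact inv_mul_cancel₀ hcT_pos.ne'
    · intro J hJ
      exact hwle.trans (hS₁min.2 J hJ)
  -- maximality
  have hmax : ∀ S, IsMinSet g f Ω S → volume (S \ Tinf) = 0 := by
    intro S hS
    have hbound : ∀ n : ℕ, volume (S \ Tinf) ≤ ((n : ENNReal))⁻¹ := by
      intro n
      have hUn : IsMinSet g f Ω (S ∪ T n) := hunion _ _ hS (hTmin n)
      have hTn_ne : volume (T n) ≠ ⊤ :=
        (lt_of_le_of_lt (measure_mono (hTmin n).2.1) hΩfin).ne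
      have hdiff : volume (S \ T n) = volume (S ∪ T n) - volume (T n) := by
        rw [← Set.union_diff_right (s := S)]
        exact measure_diff Set.subset_union_right (hTmin n).1.nullMeasurableSet hTn_ne
      have hSqTn : volume (Sq n) ≤ volume (T n) := measure_mono (hSqT n)
      have h2 : volume (S \ T n) ≤ M - (M - ((n : ENNReal))⁻¹) := by
        rw [hdiff]
        exact tsub_le_tsub (hle_M _ hUn) ((hSqvol n).trans hSqTn)
      have h3 : M - (M - ((n : ENNReal))⁻¹) ≤ ((n : ENNReal))⁻¹ := by
        rw [tsub_le_iff_right]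
        exact le_tsub_add.trans (by rw [add_comm])
      calc volume (S \ Tinf) ≤ volume (S \ T n) :=
            measure_mono (Set.diff_subset_diff_right (Set.subset_iUnion T n))
        _ ≤ _ := h2.trans h3
    have h0 : volume (S \ Tinf) ≤ 0 :=
      ge_of_tendsto' ENNReal.tendsto_inv_nat_nhds_zero hbound
    exact le_antisymm h0 zero_le
  refine ⟨Tinf, hTinfMin, hmax, ?_⟩
  intro S' hS' hmax'
  rw [Set.symmDiff_def]
  exact measure_union_null (hmax S' hS') (hmax' Tinf hTinfMin)
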